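/- Define a Lag system with context length 2 over pairs (σ, c) ∈ Σ × {blank, p} by the rules: (x,blank)(y,blank) → (x,blank), (x,blank)(y,p) → (x,p), (x,p)(y,blank) → (x,blank), for all x, y ∈ Σ. Starting from the string (s₁,blank)...(s_{n-2},blank)(s_{n-1},p)(sₙ,blank) with n ≥ 3, after n−1 iterations the memory string is (sₙ,blank)(s₁,blank)...(s_{n-2},p)(s_{n-1},blank); that is, the control token p moves one position counterclockwise in the circular queue. -/

import Mathlib

namespace Stmt2

/-- Control symbols: blank or the pulse token `p`. -/
inductive Ctl | blank | p
deriving DecidableEq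

/-- The rule set `R_p`, acting on control coordinates:
`blank·blank → blank`, `blank·p → p`, `p·blank → blank`. -/
def rc : Ctl → Ctl → Option Ctl
  | .blank, .blank => some .blank
  | .blank, .p => some .p
  | .p, .blank => some .blank
  | _, _ => none

/-- One Lag iteration with context length 2: match the control symbols of the
first two pairs, delete the first pair, append a pair with the first pair's
data symbol and the rule's output control symbol; halt (`none`) if no rule matches. -/
def step {α : Type*} (r : Ctl → Ctl → Option Ctl) :
    List (α × Ctl) → Option (List (α × Ctl))
  | (x, a) :: (y, b) :: rest => (r a b).map fun c => (y, b) :: rest ++ [(x, c)]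
  | _ => none

/-- `k` iterations of the Lag system. -/
def iterL {α : Type*} (r : Ctl → Ctl → Option Ctl) :
    ℕ → List (α × Ctl) → Option (List (α × Ctl))
  | 0, s => some s
  | k + 1, s => (step r s).bind (iterL r k)

end Stmt2

namespace Stmt2Aux

open Stmt2

lemma iterL_add {α : Type*} (r : Ctl → Ctl → Option Ctl) (a b : ℕ)
    (l : List (α × Ctl)) :
    iterL r (a + b) l = (iterL r b l).bind (iterL r a) := by
  induction b generalizing l with
  | zero => simp [iterL]
  | succ b ih =>
    show iterL r (a + b + 1) l = _
    simp only [iterL, Option.bind_assoc]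
    cases step r l with
    | none => simp
    | some t => simpa using ih t

lemma iterL_add' {α : Type*} (r : Ctl → Ctl → Option Ctl) (a b : ℕ)
    (l : List (α × Ctl)) :
    iterL r (b + a) l = (iterL r b l).bind (iterL r a) := by
  rw [Nat.add_comm]; exact iterL_add r a b l

lemma blank_phase {α : Type*} (u : List α) (y : α) (rest : List (α × Ctl)) :
    iterL rc u.length
      ((u.map fun x => (x, Ctl.blank)) ++ (y, Ctl.blank) :: rest)
    = some ((y, Ctl.blank) :: rest ++ u.map fun x => (x, Ctl.blank)) := by
  induction u generalizing rest with
  | nil => simp [iterL]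
  | cons x xs ih =>
    cases xs with
    | nil => simp [iterL, step, rc]
    | cons x' xs' =>
      show iterL rc ((x' :: xs').length + 1) _ = _
      simp only [iterL, List.map_cons, List.cons_append, step, rc, Option.map_some,
        Option.bind_some]
      have := ih (rest ++ [(x, Ctl.blank)])
      simpa [List.append_assoc] using this

end Stmt2Aux

set_option maxHeartbeats 1000000 in
open Stmt2 in
/-- Starting from `(s₁,blank)...(s_{n-2},blank)(s_{n-1},p)(sₙ,blank)` with `n ≥ 3`,
after `n−1` iterations the memory string is
`(sₙ,blank)(s₁,blank)...(s_{n-2},p)(s_{n-1},blank)`. -/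
theorem stmt2 {α : Type*} (n : ℕ) (hn : 3 ≤ n) (s : Fin n → α) :
    iterL rc (n - 1)
      (List.ofFn fun i : Fin n => (s i, if i.val = n - 2 then Ctl.p else Ctl.blank)) =
    some (List.ofFn fun i : Fin n =>
      (s ⟨(i.val + (n - 1)) % n, Nat.mod_lt _ (by omega)⟩,
        if i.val = n - 2 then Ctl.p else Ctl.blank)) := by
  obtain ⟨m, rfl⟩ : ∃ m, n = m + 3 := ⟨n - 3, by omega⟩
  have h1 : m + 3 - 1 = m + 2 := by omega
  have h2 : m + 3 - 2 = m + 1 := by omega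
  set u : List α := List.ofFn (fun i : Fin m => s ⟨i.val, by omega⟩) with hu
  have hul : u.length = m := by simp [hu]
  have hinit :
      (List.ofFn fun i : Fin (m + 3) =>
        (s i, if i.val = m + 3 - 2 then Ctl.p else Ctl.blank)) =
      (u.map fun x => (x, Ctl.blank)) ++
        (s ⟨m, by omega⟩, Ctl.blank) ::
          [(s ⟨m + 1, by omega⟩, Ctl.p), (s ⟨m + 2, by omega⟩, Ctl.blank)] := by
    apply List.ext_getElem
    · simp [hul]
    · intro i hi1 hi2
      simp only [List.getElem_ofFn, List.getElem_append, List.getElem_map,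
        List.length_map, hul, h2]
      by_cases hi : i < m
      · simp only [dif_pos hi, List.getElem_ofFn]
        have : i ≠ m + 1 := by omega
        simp [this, hu]
      · simp only [dif_neg hi]
        have : i = m ∨ i = m + 1 ∨ i = m + 2 := by
          simp at hi1; omega
        rcases this with rfl | rfl | rfl <;> simp
  have hfin :
      (List.ofFn fun i : Fin (m + 3) =>
        (s ⟨(i.val + (m + 3 - 1)) % (m + 3), Nat.mod_lt _ (by omega)⟩,
          if i.val = m + 3 - 2 then Ctl.p else Ctl.blank)) =
      (s ⟨m + 2, by omega⟩, Ctl.blank) ::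
        ((u.map fun x => (x, Ctl.blank)) ++
          [(s ⟨m, by omega⟩, Ctl.p), (s ⟨m + 1, by omega⟩, Ctl.blank)]) := by
    apply List.ext_getElem
    · simp [hul]
    · intro i hi1 hi2
      simp only [List.getElem_ofFn, h1, h2]
      have hi3 : i < m + 3 := by simp at hi1; omega
      rcases Nat.eq_zero_or_pos i with rfl | hi0
      · have : (0 + (m + 2)) % (m + 3) = m + 2 := by
          rw [Nat.zero_add, Nat.mod_eq_of_lt (by omega)]
        simp [this]
      · have hmod : (i + (m + 2)) % (m + 3) = i - 1 := by
          have : i + (m + 2) = (i - 1) + (m + 3) := by omega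
          rw [this, Nat.add_mod_right, Nat.mod_eq_of_lt (by omega)]
        obtain ⟨j, rfl⟩ : ∃ j, i = j + 1 := ⟨i - 1, by omega⟩
        rw [List.getElem_cons_succ]
        rw [List.getElem_append]
        by_cases hi : j < (u.map fun x => (x, Ctl.blank)).length
        · rw [dif_pos hi]
          rw [List.getElem_map, List.getElem_ofFn]
          simp only [List.length_map, hul] at hi
          have : j + 1 ≠ m + 1 := by omega
          simp [hmod, this, hu, show j ≠ m by omega]
        · rw [dif_neg hi]
          simp only [List.length_map, hul] at hi ⊢
          have : j = m ∨ j = m + 1 := by omega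
          rcases this with rfl | rfl <;> simp [hmod]
  rw [hinit, hfin, h1]
  have hsplit : m + 2 = 2 + m := by omega
  have hb := Stmt2Aux.blank_phase u (s ⟨m, by omega⟩)
    [(s ⟨m + 1, by omega⟩, Ctl.p), (s ⟨m + 2, by omega⟩, Ctl.blank)]
  rw [hul] at hb
  rw [Stmt2Aux.iterL_add', hb]
  simp [iterL, step, rc]
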